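/- arXiv:2403.01141 — 4 statements merged into one kernel-verified Lean document; each statement's English description precedes it below -/
import Mathlib

section
/- Let S : ℝᵈ×ℝᵈ → ℝ be continuous, coercive, diagonal-periodic, and let u, v be continuous ℤᵈ-periodic functions with u = T⁻[v]. For x, y ∈ ℝᵈ, the following are equivalent: (i) x attains the infimum in T⁻[v](y) = inf_z {v(z) + S(z,y)}; (ii) y attains the supremum in T⁺[u](x) = sup_z {u(z) − S(x,z)} and T⁺∘T⁻[v](x) = v(x). -/
open Filter Topology

/-- The discrete backward Lax-Oleinik operator. -/
noncomputable def Tminus {d : ℕ} (S : (Fin d → ℝ) → (Fin d → ℝ) → ℝ)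
    (u : (Fin d → ℝ) → ℝ) : (Fin d → ℝ) → ℝ :=
  fun y => ⨅ x, (u x + S x y)

/-- The discrete forward Lax-Oleinik operator. -/
noncomputable def Tplus {d : ℕ} (S : (Fin d → ℝ) → (Fin d → ℝ) → ℝ)
    (u : (Fin d → ℝ) → ℝ) : (Fin d → ℝ) → ℝ :=
  fun x => ⨆ y, (u y - S x y)

/-- ℤᵈ-periodicity. -/
def ZPeriodic {d : ℕ} (u : (Fin d → ℝ) → ℝ) : Prop :=
  ∀ (m : Fin d → ℤ) (x : Fin d → ℝ), u (x + fun i => (m i : ℝ)) = u x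

/-- Coercivity: S(x,y) → +∞ as ‖x−y‖ → ∞. -/
def Coercive {d : ℕ} (S : (Fin d → ℝ) → (Fin d → ℝ) → ℝ) : Prop :=
  ∀ M : ℝ, ∃ R : ℝ, ∀ x y : Fin d → ℝ, R ≤ ‖x - y‖ → M ≤ S x y

/-- Diagonal periodicity: S(x+m, y+m) = S(x,y) for m ∈ ℤᵈ. -/
def DiagPeriodic {d : ℕ} (S : (Fin d → ℝ) → (Fin d → ℝ) → ℝ) : Prop :=
  ∀ (m : Fin d → ℤ) (x y : Fin d → ℝ),
    S (x + fun i => (m i : ℝ)) (y + fun i => (m i : ℝ)) = S x y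

/-- Equivalence between attaining the backward infimum and attaining the
forward supremum together with the contact condition T⁺∘T⁻[v](x) = v(x). -/
theorem backward_min_iff_forward_max {d : ℕ} (S : (Fin d → ℝ) → (Fin d → ℝ) → ℝ)
    (hS : Continuous fun p : (Fin d → ℝ) × (Fin d → ℝ) => S p.1 p.2)
    (hco : Coercive S) (hdp : DiagPeriodic S)
    (v u : (Fin d → ℝ) → ℝ) (hv : Continuous v) (hvp : ZPeriodic v)
    (hu : u = Tminus S v) (x y : Fin d → ℝ) :
    (∀ z, v x + S x y ≤ v z + S z y) ↔
      ((∀ z, u z - S x z ≤ u y - S x y) ∧ Tplus S (Tminus S v) x = v x) := by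
  -- v is bounded below
  have hvb : ∃ c, ∀ w, c ≤ v w := by
    have hK : IsCompact (Set.Icc (0 : Fin d → ℝ) 1) := isCompact_Icc
    have hne : (Set.Icc (0 : Fin d → ℝ) 1).Nonempty := ⟨0, by simp⟩
    obtain ⟨w0, _, hmin⟩ := hK.exists_isMinOn hne hv.continuousOn
    refine ⟨v w0, fun w => ?_⟩
    have hw : (fun i => Int.fract (w i)) + (fun i => ((⌊w i⌋ : ℤ) : ℝ)) = w :=
      funext fun i => Int.fract_add_floor (w i)
    have hmem : (fun i => Int.fract (w i)) ∈ Set.Icc (0 : Fin d → ℝ) 1 :=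
      ⟨fun i => Int.fract_nonneg _, fun i => (Int.fract_lt_one _).le⟩
    calc v w0 ≤ v (fun i => Int.fract (w i)) := hmin hmem
      _ = v ((fun i => Int.fract (w i)) + fun i => ((⌊w i⌋ : ℤ) : ℝ)) := (hvp _ _).symm
      _ = v w := by rw [hw]
  -- S(·, y') is bounded below
  have hSb : ∀ y' : Fin d → ℝ, ∃ c, ∀ w, c ≤ S w y' := by
    intro y'
    obtain ⟨R, hR⟩ := hco 0
    have hK : IsCompact (Metric.closedBall y' (max R 0)) := isCompact_closedBall _ _
    have hne : (Metric.closedBall y' (max R 0)).Nonempty :=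
      Metric.nonempty_closedBall.2 (le_max_right R 0)
    have hc1 : Continuous fun w => S w y' := hS.comp (continuous_id.prodMk continuous_const)
    obtain ⟨w0, _, hmin⟩ := hK.exists_isMinOn hne hc1.continuousOn
    refine ⟨min (S w0 y') 0, fun w => ?_⟩
    by_cases hmem : w ∈ Metric.closedBall y' (max R 0)
    · exact le_trans (min_le_left _ _) (hmin hmem)
    · have h1 : max R 0 < dist w y' := lt_of_not_ge (by simpa [Metric.mem_closedBall] using hmem)
      have h2 : R ≤ ‖w - y'‖ := by
        rw [← dist_eq_norm]; exact le_trans (le_max_left R 0) h1.le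
      exact le_trans (min_le_right _ _) (hR w y' h2)
  have hbdd : ∀ y' : Fin d → ℝ, BddBelow (Set.range fun w => v w + S w y') := by
    intro y'
    obtain ⟨c, hc⟩ := hvb
    obtain ⟨c', hc'⟩ := hSb y'
    exact ⟨c + c', by rintro _ ⟨w, rfl⟩; exact add_le_add (hc w) (hc' w)⟩
  have hule : ∀ z x' : Fin d → ℝ, u z ≤ v x' + S x' z := by
    intro z x'; rw [hu]; exact ciInf_le (hbdd z) x'
  constructor
  · intro h
    have huy : u y = v x + S x y :=
      le_antisymm (hule y x) (by rw [hu]; exact le_ciInf h)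
    constructor
    · intro z
      have := hule z x
      rw [huy]; linarith
    · rw [← hu]
      have hub : ∀ z, u z - S x z ≤ v x := fun z => by have := hule z x; linarith
      apply le_antisymm
      · exact ciSup_le hub
      · have hvx : v x = u y - S x y := by rw [huy]; ring
        rw [hvx]
        exact le_ciSup ⟨v x, by rintro _ ⟨z, rfl⟩; exact hub z⟩ y
  · rintro ⟨hy, hT⟩ z
    rw [← hu] at hT
    have hsup : Tplus S u x = u y - S x y :=
      le_antisymm (ciSup_le hy) (le_ciSup ⟨u y - S x y, by rintro _ ⟨w, rfl⟩; exact hy w⟩ y)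
    have huy : u y = v x + S x y := by rw [hT] at hsup; linarith
    have := hule y z
    rw [huy] at this; linarith
end

section
/- Let S : ℝᵈ×ℝᵈ → ℝ be continuous, coercive, and diagonal-periodic, and let v : ℝᵈ → ℝ be continuous and ℤᵈ-periodic with u = T⁻[v]. Then the optimal forward map Σ₊[u] is surjective: for every y ∈ ℝᵈ there exists x ∈ ℝᵈ with y ∈ argmax_z {u(z) − S(x,z)}. -/
open Filter Topology

/-- A continuous ℤᵈ-periodic function is bounded below. -/
lemma periodic_bddBelow {d : ℕ} (v : (Fin d → ℝ) → ℝ) (hv : Continuous v)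
    (hvp : ZPeriodic v) : ∃ B, ∀ x, B ≤ v x := by
  obtain ⟨x₀, hx₀, hmin⟩ := (isCompact_closedBall (0 : Fin d → ℝ) 1).exists_isMinOn
    ⟨0, Metric.mem_closedBall_self zero_le_one⟩ hv.continuousOn
  refine ⟨v x₀, fun x => ?_⟩
  set m : Fin d → ℤ := fun i => -⌊x i⌋
  have hx : v x = v (x + fun i => (m i : ℝ)) := (hvp m x).symm
  rw [hx]
  apply hmin
  rw [Metric.mem_closedBall, dist_zero_right]
  rw [pi_norm_le_iff_of_nonneg zero_le_one]
  intro i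
  simp only [Pi.add_apply, m, Int.cast_neg]
  rw [Real.norm_eq_abs, abs_le]
  have h2 : x i + -(⌊x i⌋:ℝ) = Int.fract (x i) := by rw [Int.fract]; ring
  have h0 := Int.fract_nonneg (x i)
  have h1 := Int.fract_lt_one (x i)
  constructor <;> linarith

/-- For fixed y, x ↦ v x + S x y is bounded below. -/
lemma bddBelow_aux {d : ℕ} (S : (Fin d → ℝ) → (Fin d → ℝ) → ℝ)
    (hS : Continuous fun p : (Fin d → ℝ) × (Fin d → ℝ) => S p.1 p.2)
    (hco : Coercive S) (v : (Fin d → ℝ) → ℝ)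
    (B : ℝ) (hB : ∀ x, B ≤ v x) (y : Fin d → ℝ) :
    BddBelow (Set.range fun x => v x + S x y) := by
  obtain ⟨R, hR⟩ := hco 0
  have hScont : Continuous fun x => S x y := hS.comp (Continuous.prodMk_left y)
  obtain ⟨x₀, hx₀, hmin⟩ := (isCompact_closedBall y (max R 0)).exists_isMinOn
    ⟨y, Metric.mem_closedBall_self (le_max_right _ _)⟩ hScont.continuousOn
  refine ⟨B + min (S x₀ y) 0, Set.forall_mem_range.mpr fun x => ?_⟩
  have : min (S x₀ y) 0 ≤ S x y := by
    by_cases hx : x ∈ Metric.closedBall y (max R 0)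
    · exact le_trans (min_le_left _ _) (hmin hx)
    · refine le_trans (min_le_right _ _) (hR x y ?_)
      rw [Metric.mem_closedBall, not_le, dist_eq_norm] at hx
      exact le_trans (le_max_left R 0) hx.le
  have := hB x
  linarith

/-- The infimum defining T⁻[v] is attained. -/
lemma exists_min {d : ℕ} (S : (Fin d → ℝ) → (Fin d → ℝ) → ℝ)
    (hS : Continuous fun p : (Fin d → ℝ) × (Fin d → ℝ) => S p.1 p.2)
    (hco : Coercive S) (v : (Fin d → ℝ) → ℝ) (hv : Continuous v)
    (B : ℝ) (hB : ∀ x, B ≤ v x) (y : Fin d → ℝ) :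
    ∃ x, ∀ z, v x + S x y ≤ v z + S z y := by
  obtain ⟨R, hR⟩ := hco (v y + S y y - B)
  have hScont : Continuous fun x => S x y := hS.comp (Continuous.prodMk_left y)
  have hfcont : Continuous fun x => v x + S x y := hv.add hScont
  obtain ⟨x₀, hx₀, hmin⟩ := (isCompact_closedBall y (max R 0)).exists_isMinOn
    ⟨y, Metric.mem_closedBall_self (le_max_right _ _)⟩ hfcont.continuousOn
  refine ⟨x₀, fun z => ?_⟩
  by_cases hz : z ∈ Metric.closedBall y (max R 0)
  · exact hmin hz
  · have hy : v x₀ + S x₀ y ≤ v y + S y y :=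
      hmin (Metric.mem_closedBall_self (le_max_right _ _))
    rw [Metric.mem_closedBall, not_le, dist_eq_norm] at hz
    have := hR z y (le_trans (le_max_left R 0) hz.le)
    have := hB z
    linarith

/-- The optimal forward map of u = T⁻[v] is surjective. -/
theorem optimal_forward_map_surjective {d : ℕ} (S : (Fin d → ℝ) → (Fin d → ℝ) → ℝ)
    (hS : Continuous fun p : (Fin d → ℝ) × (Fin d → ℝ) => S p.1 p.2)
    (hco : Coercive S) (hdp : DiagPeriodic S)
    (v u : (Fin d → ℝ) → ℝ) (hv : Continuous v) (hvp : ZPeriodic v)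
    (hu : u = Tminus S v) :
    ∀ y : Fin d → ℝ, ∃ x : Fin d → ℝ, ∀ z, u z - S x z ≤ u y - S x y := by
  intro y
  obtain ⟨B, hB⟩ := periodic_bddBelow v hv hvp
  obtain ⟨x, hx⟩ := exists_min S hS hco v hv B hB y
  refine ⟨x, fun z => ?_⟩
  have huy : u y = v x + S x y := by
    rw [hu]
    unfold Tminus
    exact le_antisymm (ciInf_le (bddBelow_aux S hS hco v B hB y) x) (le_ciInf hx)
  have huz : u z ≤ v x + S x z := by
    rw [hu]
    exact ciInf_le (bddBelow_aux S hS hco v B hB z) x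
  rw [huy]
  linarith
end

section
/- Let v : ℝᵈ → ℝ be ℤᵈ-periodic and semiconcave with linear modulus, and let S : ℝᵈ×ℝᵈ → ℝ be continuous, coercive, diagonal-periodic, locally semiconcave, and ferromagnetic. Then the optimal backward map Σ₋[v] is injective: if some x attains both infima inf_z {v(z)+S(z,y₁)} and inf_z {v(z)+S(z,y₂)}, then y₁ = y₂. -/
open Filter Topology

/-- Semiconcavity with a linear modulus. -/
def Semiconcave {d : ℕ} (v : (Fin d → ℝ) → ℝ) : Prop :=
  ∃ C : ℝ, 0 ≤ C ∧ ∀ x y : Fin d → ℝ, ∀ θ : ℝ, θ ∈ Set.Icc (0:ℝ) 1 →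
    θ * v x + (1 - θ) * v y - v (θ • x + (1 - θ) • y) ≤
      C / 2 * θ * (1 - θ) * ‖x - y‖ ^ 2

/-- Local semiconcavity (with linear modulus) on a normed space. -/
def LocallySemiconcave {E : Type*} [NormedAddCommGroup E] [NormedSpace ℝ E]
    (f : E → ℝ) : Prop :=
  ∀ x : E, ∃ U ∈ 𝓝 x, Convex ℝ U ∧ ∃ C : ℝ, 0 ≤ C ∧
    ∀ y ∈ U, ∀ z ∈ U, ∀ θ : ℝ, θ ∈ Set.Icc (0:ℝ) 1 →
      θ * f y + (1 - θ) * f z - f (θ • y + (1 - θ) • z) ≤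
        C / 2 * θ * (1 - θ) * ‖y - z‖ ^ 2

/-- The ferromagnetic property: S is C¹ and the partial-derivative maps
`y ↦ ∂₁S(x,y)` and `x ↦ ∂₂S(x,y)` are homeomorphisms. -/
def Ferromagnetic {d : ℕ} (S : (Fin d → ℝ) → (Fin d → ℝ) → ℝ) : Prop :=
  ContDiff ℝ 1 (fun p : (Fin d → ℝ) × (Fin d → ℝ) => S p.1 p.2) ∧
  (∀ x : Fin d → ℝ, ∃ h : (Fin d → ℝ) ≃ₜ ((Fin d → ℝ) →L[ℝ] ℝ),
      ∀ y, h y = fderiv ℝ (fun t => S t y) x) ∧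
  (∀ y : Fin d → ℝ, ∃ h : (Fin d → ℝ) ≃ₜ ((Fin d → ℝ) →L[ℝ] ℝ),
      ∀ x, h x = fderiv ℝ (fun t => S x t) y)

/-- The optimal backward map Σ₋[v] of a semiconcave v is injective. -/
theorem optimal_backward_map_injective {d : ℕ} (S : (Fin d → ℝ) → (Fin d → ℝ) → ℝ)
    (hS : Continuous fun p : (Fin d → ℝ) × (Fin d → ℝ) => S p.1 p.2)
    (hco : Coercive S) (hdp : DiagPeriodic S)
    (hlsc : LocallySemiconcave fun p : (Fin d → ℝ) × (Fin d → ℝ) => S p.1 p.2)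
    (hfer : Ferromagnetic S)
    (v : (Fin d → ℝ) → ℝ) (hvp : ZPeriodic v) (hv : Semiconcave v)
    (x y₁ y₂ : Fin d → ℝ)
    (h1 : ∀ z, v x + S x y₁ ≤ v z + S z y₁)
    (h2 : ∀ z, v x + S x y₂ ≤ v z + S z y₂) :
    y₁ = y₂ := by
  obtain ⟨hC1, hhom, -⟩ := hfer
  obtain ⟨h, hh⟩ := hhom x
  obtain ⟨C, hC0, hsc⟩ := hv
  have hdiff : ∀ y : Fin d → ℝ, DifferentiableAt ℝ (fun t => S t y) x := by
    intro y
    exact ((hC1.comp (contDiff_id.prodMk contDiff_const)).differentiable one_ne_zero).differentiableAt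
  have key : ∀ e : Fin d → ℝ,
      fderiv ℝ (fun t => S t y₁) x e = fderiv ℝ (fun t => S t y₂) x e := by
    intro e
    set ψ : ℝ → ℝ := fun t => S (x + t • e) y₁ + S (x - t • e) y₂ + C * ‖e‖ ^ 2 * t ^ 2
      with hψ
    have hmin : IsLocalMin ψ 0 := by
      apply Filter.Eventually.of_forall
      intro t
      have hmid : (1/2 : ℝ) • (x + t • e) + (1 - 1/2 : ℝ) • (x - t • e) = x := by
        norm_num
        module
      have hsc' := hsc (x + t • e) (x - t • e) (1/2) (by norm_num)
      rw [hmid] at hsc'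
      have hnorm : ‖(x + t • e) - (x - t • e)‖ ^ 2 = 4 * t ^ 2 * ‖e‖ ^ 2 := by
        have : (x + t • e) - (x - t • e) = (2 * t) • e := by module
        rw [this, norm_smul, mul_pow, Real.norm_eq_abs, sq_abs]
        ring
      rw [hnorm] at hsc'
      have ha := h1 (x + t • e)
      have hb := h2 (x - t • e)
      simp only [hψ]
      have h0 : x + (0:ℝ) • e = x := by simp
      have h0' : x - (0:ℝ) • e = x := by simp
      rw [h0, h0']
      nlinarith [sq_nonneg t, norm_nonneg e]
    have hg1 : HasDerivAt (fun t : ℝ => x + t • e) e 0 := by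
      simpa using ((hasDerivAt_id (0:ℝ)).smul_const e).const_add x
    have hg2 : HasDerivAt (fun t : ℝ => x - t • e) (-e) 0 := by
      simpa using ((hasDerivAt_id (0:ℝ)).smul_const e).const_sub x
    have h0 : x + (0:ℝ) • e = x := by simp
    have h0' : x - (0:ℝ) • e = x := by simp
    have A : HasDerivAt (fun t : ℝ => S (x + t • e) y₁)
        (fderiv ℝ (fun z => S z y₁) x e) 0 := by
      have hf : HasFDerivAt (fun z => S z y₁) (fderiv ℝ (fun z => S z y₁) x)
          ((fun t : ℝ => x + t • e) 0) := by
        simpa [h0] using (hdiff y₁).hasFDerivAt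
      exact hf.comp_hasDerivAt 0 hg1
    have B : HasDerivAt (fun t : ℝ => S (x - t • e) y₂)
        (-(fderiv ℝ (fun z => S z y₂) x e)) 0 := by
      have hf : HasFDerivAt (fun z => S z y₂) (fderiv ℝ (fun z => S z y₂) x)
          ((fun t : ℝ => x - t • e) 0) := by
        simpa [h0'] using (hdiff y₂).hasFDerivAt
      have := hf.comp_hasDerivAt 0 hg2
      rw [map_neg] at this
      exact this
    have Q : HasDerivAt (fun t : ℝ => C * ‖e‖ ^ 2 * t ^ 2) 0 0 := by
      simpa using (hasDerivAt_pow 2 (0:ℝ)).const_mul (C * ‖e‖ ^ 2)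
    have hψd : HasDerivAt ψ
        (fderiv ℝ (fun z => S z y₁) x e + -(fderiv ℝ (fun z => S z y₂) x e) + 0) 0 :=
      (A.add B).add Q
    have := hmin.deriv_eq_zero
    rw [hψd.deriv] at this
    linarith
  have heq : fderiv ℝ (fun t => S t y₁) x = fderiv ℝ (fun t => S t y₂) x :=
    ContinuousLinearMap.ext key
  have : h y₁ = h y₂ := by rw [hh, hh, heq]
  exact h.injective this
end

section
/- Let u be a sub-action, u₋ := lim_{n→∞}(T⁻ⁿ[u] − nS̄) and u₊ := lim_{n→∞}(T⁺ⁿ[u] + nS̄), and u₋₊ := lim_{n→∞}(T⁺ⁿ[u₋] + nS̄). Then u₊ = u₋₊. That is, applying the forward Lax-Oleinik limit to the backward weak K.A.M. limit of a sub-action recovers the forward weak K.A.M. limit of the original sub-action. -/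
open Filter Topology

namespace LaxOleinikAux

variable {d : ℕ}

/-- Reduction to the fundamental domain. -/
lemma frac_mem (x : Fin d → ℝ) :
    (x + fun i => (((fun j => -⌊x j⌋) i : ℤ) : ℝ)) ∈ Set.Icc (0 : Fin d → ℝ) 1 := by
  constructor <;> intro i <;>
    simp only [Pi.add_apply, Pi.zero_apply, Pi.one_apply, Int.cast_neg]
  · have := Int.floor_le (x i); linarith
  · have := Int.lt_floor_add_one (x i); linarith

lemma norm_le_one_of_mem {x : Fin d → ℝ} (hx : x ∈ Set.Icc (0 : Fin d → ℝ) 1) :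
    ‖x‖ ≤ 1 := by
  rw [pi_norm_le_iff_of_nonneg (by norm_num)]
  intro i
  have h0 := hx.1 i
  have h1 := hx.2 i
  simp only [Pi.zero_apply, Pi.one_apply] at h0 h1
  rw [Real.norm_eq_abs, abs_le]
  exact ⟨by linarith, h1⟩

/-- S is bounded below. -/
lemma S_lb (S : (Fin d → ℝ) → (Fin d → ℝ) → ℝ)
    (hS : Continuous fun p : (Fin d → ℝ) × (Fin d → ℝ) => S p.1 p.2)
    (hco : Coercive S) (hdp : DiagPeriodic S) :
    ∃ c, ∀ x y, c ≤ S x y := by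
  obtain ⟨R, hR⟩ := hco 0
  set K := (Set.Icc (0 : Fin d → ℝ) 1) ×ˢ (Metric.closedBall (0 : Fin d → ℝ) (|R| + 2))
    with hK
  have hKc : IsCompact K :=
    (isCompact_Icc).prod (isCompact_closedBall _ _)
  have hKne : K.Nonempty := by
    refine ⟨(0, 0), ⟨⟨fun i => le_refl _, fun i => by norm_num⟩, ?_⟩⟩
    simp only [Metric.mem_closedBall, dist_self]
    positivity
  obtain ⟨p, _, hp'⟩ := hKc.exists_isMinOn hKne hS.continuousOn
  have hp := isMinOn_iff.1 hp'
  refine ⟨min (S p.1 p.2) 0, fun x y => ?_⟩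
  by_cases h : |R| + 1 ≤ ‖x - y‖
  · refine le_trans (min_le_right _ _) (hR x y ?_)
    have : R ≤ |R| + 1 := by have := le_abs_self R; linarith
    linarith
  · push_neg at h
    have hEq := hdp (fun j => -⌊x j⌋) x y
    set x' := x + fun i => (((fun j => -⌊x j⌋) i : ℤ) : ℝ) with hx'
    set y' := y + fun i => (((fun j => -⌊x j⌋) i : ℤ) : ℝ) with hy'
    have hx'mem : x' ∈ Set.Icc (0 : Fin d → ℝ) 1 := frac_mem x
    have hdiff : y' - x' = y - x := by
      rw [hx', hy']; abel
    have hy'mem : y' ∈ Metric.closedBall (0 : Fin d → ℝ) (|R| + 2) := by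
      rw [Metric.mem_closedBall, dist_zero_right]
      have h1 : ‖y'‖ ≤ ‖x'‖ + ‖y' - x'‖ := by
        have := norm_add_le x' (y' - x')
        simpa using this
      have h2 : ‖x'‖ ≤ 1 := norm_le_one_of_mem hx'mem
      have h3 : ‖y' - x'‖ = ‖x - y‖ := by rw [hdiff, norm_sub_rev]
      linarith
    have hmin := hp (x', y') ⟨hx'mem, hy'mem⟩
    rw [← hEq]
    exact le_trans (min_le_left _ _) hmin

/-- S is bounded above on the diagonal. -/
lemma S_diag_ub (S : (Fin d → ℝ) → (Fin d → ℝ) → ℝ)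
    (hS : Continuous fun p : (Fin d → ℝ) × (Fin d → ℝ) => S p.1 p.2)
    (hdp : DiagPeriodic S) :
    ∃ C, ∀ x, S x x ≤ C := by
  have hKc : IsCompact ((Set.Icc (0 : Fin d → ℝ) 1) ×ˢ (Set.Icc (0 : Fin d → ℝ) 1)) :=
    (isCompact_Icc).prod isCompact_Icc
  have hKne : ((Set.Icc (0 : Fin d → ℝ) 1) ×ˢ (Set.Icc (0 : Fin d → ℝ) 1)).Nonempty :=
    ⟨(0, 0), ⟨⟨fun i => le_refl _, fun i => by norm_num⟩,
      ⟨fun i => le_refl _, fun i => by norm_num⟩⟩⟩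
  obtain ⟨p, _, hp'⟩ := hKc.exists_isMaxOn hKne hS.continuousOn
  have hp := isMaxOn_iff.1 hp'
  refine ⟨S p.1 p.2, fun x => ?_⟩
  have hEq := hdp (fun j => -⌊x j⌋) x x
  rw [← hEq]
  exact hp ((x + fun i => (((fun j => -⌊x j⌋) i : ℤ) : ℝ)),
    (x + fun i => (((fun j => -⌊x j⌋) i : ℤ) : ℝ))) ⟨frac_mem x, frac_mem x⟩

/-- Continuous periodic functions are bounded. -/
lemma periodic_bdd (u : (Fin d → ℝ) → ℝ) (hu : Continuous u) (hup : ZPeriodic u) :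
    ∃ B, ∀ x, |u x| ≤ B := by
  have hKc : IsCompact (Set.Icc (0 : Fin d → ℝ) 1) := isCompact_Icc
  have hKne : (Set.Icc (0 : Fin d → ℝ) 1).Nonempty :=
    ⟨0, ⟨fun i => le_refl _, fun i => by norm_num⟩⟩
  obtain ⟨p, _, hp'⟩ := hKc.exists_isMaxOn hKne (hu.abs.continuousOn)
  have hp := isMaxOn_iff.1 hp'
  refine ⟨|u p|, fun x => ?_⟩
  have hper := hup (fun j => -⌊x j⌋) x
  rw [← hper]
  exact hp _ (frac_mem x)

/-- Boundedness predicate. -/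
def Bdd (v : (Fin d → ℝ) → ℝ) : Prop := ∃ B, ∀ x, |v x| ≤ B

lemma bddBelow_minus (S : (Fin d → ℝ) → (Fin d → ℝ) → ℝ) {c : ℝ}
    (hc : ∀ x y, c ≤ S x y) {v : (Fin d → ℝ) → ℝ} (hv : Bdd v) (y : Fin d → ℝ) :
    BddBelow (Set.range fun x => v x + S x y) := by
  obtain ⟨B, hB⟩ := hv
  refine ⟨-B + c, ?_⟩
  rintro z ⟨x, rfl⟩
  have h1 := (abs_le.1 (hB x)).1
  have h2 := hc x y
  dsimp only
  linarith

lemma bddAbove_plus (S : (Fin d → ℝ) → (Fin d → ℝ) → ℝ) {c : ℝ}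
    (hc : ∀ x y, c ≤ S x y) {v : (Fin d → ℝ) → ℝ} (hv : Bdd v) (x : Fin d → ℝ) :
    BddAbove (Set.range fun y => v y - S x y) := by
  obtain ⟨B, hB⟩ := hv
  refine ⟨B - c, ?_⟩
  rintro z ⟨y, rfl⟩
  have h1 := (abs_le.1 (hB y)).2
  have h2 := hc x y
  dsimp only
  linarith

lemma Tminus_bdd (S : (Fin d → ℝ) → (Fin d → ℝ) → ℝ) {c C : ℝ}
    (hc : ∀ x y, c ≤ S x y) (hC : ∀ x, S x x ≤ C)
    {v : (Fin d → ℝ) → ℝ} (hv : Bdd v) : Bdd (Tminus S v) := by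
  obtain ⟨B, hB⟩ := hv
  refine ⟨B + |C| + |c|, fun y => ?_⟩
  rw [abs_le]
  constructor
  · refine le_ciInf fun x => ?_
    have h1 := (abs_le.1 (hB x)).1
    have h2 := hc x y
    have h3 := neg_abs_le c
    have h4 : (0:ℝ) ≤ |C| := abs_nonneg _
    linarith
  · refine le_trans (ciInf_le (bddBelow_minus S hc ⟨B, hB⟩ y) y) ?_
    have h1 := (abs_le.1 (hB y)).2
    have h2 := hC y
    have h3 := le_abs_self C
    have h4 : (0:ℝ) ≤ |c| := abs_nonneg _
    linarith

lemma Tplus_bdd (S : (Fin d → ℝ) → (Fin d → ℝ) → ℝ) {c C : ℝ}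
    (hc : ∀ x y, c ≤ S x y) (hC : ∀ x, S x x ≤ C)
    {v : (Fin d → ℝ) → ℝ} (hv : Bdd v) : Bdd (Tplus S v) := by
  obtain ⟨B, hB⟩ := hv
  refine ⟨B + |C| + |c|, fun x => ?_⟩
  rw [abs_le]
  constructor
  · refine le_trans ?_ (le_ciSup (bddAbove_plus S hc ⟨B, hB⟩ x) x)
    have h1 := (abs_le.1 (hB x)).1
    have h2 := hC x
    have h3 := le_abs_self C
    have h4 : (0:ℝ) ≤ |c| := abs_nonneg _
    linarith
  · refine ciSup_le fun y => ?_
    have h1 := (abs_le.1 (hB y)).2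
    have h2 := hc x y
    have h3 := neg_abs_le c
    have h4 : (0:ℝ) ≤ |C| := abs_nonneg _
    linarith

lemma Tminus_iter_bdd (S : (Fin d → ℝ) → (Fin d → ℝ) → ℝ) {c C : ℝ}
    (hc : ∀ x y, c ≤ S x y) (hC : ∀ x, S x x ≤ C)
    {v : (Fin d → ℝ) → ℝ} (hv : Bdd v) (n : ℕ) :
    Bdd ((Tminus S)^[n] v) := by
  induction n with
  | zero => exact hv
  | succ n ih => rw [Function.iterate_succ_apply']; exact Tminus_bdd S hc hC ih

lemma Tplus_iter_bdd (S : (Fin d → ℝ) → (Fin d → ℝ) → ℝ) {c C : ℝ}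
    (hc : ∀ x y, c ≤ S x y) (hC : ∀ x, S x x ≤ C)
    {v : (Fin d → ℝ) → ℝ} (hv : Bdd v) (n : ℕ) :
    Bdd ((Tplus S)^[n] v) := by
  induction n with
  | zero => exact hv
  | succ n ih => rw [Function.iterate_succ_apply']; exact Tplus_bdd S hc hC ih

lemma Tminus_mono (S : (Fin d → ℝ) → (Fin d → ℝ) → ℝ) {c : ℝ}
    (hc : ∀ x y, c ≤ S x y) {v w : (Fin d → ℝ) → ℝ} (hv : Bdd v) {e : ℝ}
    (h : ∀ x, v x ≤ w x + e) (y : Fin d → ℝ) :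
    Tminus S v y ≤ Tminus S w y + e := by
  rw [← sub_le_iff_le_add]
  refine le_ciInf fun x => ?_
  rw [sub_le_iff_le_add]
  calc Tminus S v y ≤ v x + S x y := ciInf_le (bddBelow_minus S hc hv y) x
    _ ≤ w x + S x y + e := by have := h x; linarith

lemma Tplus_mono (S : (Fin d → ℝ) → (Fin d → ℝ) → ℝ) {c : ℝ}
    (hc : ∀ x y, c ≤ S x y) {v w : (Fin d → ℝ) → ℝ} (hw : Bdd w) {e : ℝ}
    (h : ∀ x, v x ≤ w x + e) (x : Fin d → ℝ) :
    Tplus S v x ≤ Tplus S w x + e := by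
  refine ciSup_le fun y => ?_
  have h1 : w y - S x y ≤ Tplus S w x := le_ciSup (bddAbove_plus S hc hw x) y
  have h2 := h y
  linarith

lemma Tplus_iter_mono (S : (Fin d → ℝ) → (Fin d → ℝ) → ℝ) {c C : ℝ}
    (hc : ∀ x y, c ≤ S x y) (hC : ∀ x, S x x ≤ C)
    {v w : (Fin d → ℝ) → ℝ} (hw : Bdd w) {e : ℝ}
    (h : ∀ x, v x ≤ w x + e) (m : ℕ) (x : Fin d → ℝ) :
    (Tplus S)^[m] v x ≤ (Tplus S)^[m] w x + e := by
  induction m generalizing x with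
  | zero => exact h x
  | succ m ih =>
    rw [Function.iterate_succ_apply', Function.iterate_succ_apply']
    exact Tplus_mono S hc (Tplus_iter_bdd S hc hC hw m) ih x

lemma Tminus_iter_mono (S : (Fin d → ℝ) → (Fin d → ℝ) → ℝ) {c C : ℝ}
    (hc : ∀ x y, c ≤ S x y) (hC : ∀ x, S x x ≤ C)
    {v w : (Fin d → ℝ) → ℝ} (hv : Bdd v) {e : ℝ}
    (h : ∀ x, v x ≤ w x + e) (m : ℕ) (x : Fin d → ℝ) :
    (Tminus S)^[m] v x ≤ (Tminus S)^[m] w x + e := by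
  induction m generalizing x with
  | zero => exact h x
  | succ m ih =>
    rw [Function.iterate_succ_apply', Function.iterate_succ_apply']
    exact Tminus_mono S hc (Tminus_iter_bdd S hc hC hv m) ih x

lemma TplusTminus_le (S : (Fin d → ℝ) → (Fin d → ℝ) → ℝ) {c : ℝ}
    (hc : ∀ x y, c ≤ S x y) {w : (Fin d → ℝ) → ℝ} (hw : Bdd w) (x : Fin d → ℝ) :
    Tplus S (Tminus S w) x ≤ w x := by
  refine ciSup_le fun y => ?_
  rw [sub_le_iff_le_add]
  exact ciInf_le (bddBelow_minus S hc hw y) x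

/-- Key inequality: T⁺ⁿ⁺ᵐ T⁻ⁿ w ≤ T⁺ᵐ w. -/
lemma TplusTminus_iter_le (S : (Fin d → ℝ) → (Fin d → ℝ) → ℝ) {c C : ℝ}
    (hc : ∀ x y, c ≤ S x y) (hC : ∀ x, S x x ≤ C)
    {w : (Fin d → ℝ) → ℝ} (hw : Bdd w) (n m : ℕ) (x : Fin d → ℝ) :
    (Tplus S)^[n + m] ((Tminus S)^[n] w) x ≤ (Tplus S)^[m] w x := by
  induction n generalizing w m with
  | zero => simp
  | succ n ih =>
    have e1 : n + 1 + m = n + (m + 1) := by ring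
    rw [e1, Function.iterate_succ_apply]
    calc (Tplus S)^[n + (m+1)] ((Tminus S)^[n] (Tminus S w)) x
        ≤ (Tplus S)^[m+1] (Tminus S w) x := ih (Tminus_bdd S hc hC hw) (m+1)
      _ = (Tplus S)^[m] (Tplus S (Tminus S w)) x := by
          rw [Function.iterate_succ_apply]
      _ ≤ (Tplus S)^[m] w x + 0 :=
          Tplus_iter_mono S hc hC hw
            (fun z => by simpa using TplusTminus_le S hc hw z) m x
      _ = (Tplus S)^[m] w x := by ring

end LaxOleinikAux

open LaxOleinikAux

/-- The forward limit of the backward weak K.A.M. limit of a sub-action equals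
the forward weak K.A.M. limit of the sub-action: u₊ = u₋₊. -/
theorem forward_limit_of_backward_limit {d : ℕ}
    (S : (Fin d → ℝ) → (Fin d → ℝ) → ℝ)
    (hS : Continuous fun p : (Fin d → ℝ) × (Fin d → ℝ) => S p.1 p.2)
    (hco : Coercive S) (hdp : DiagPeriodic S) (Sbar : ℝ)
    (u : (Fin d → ℝ) → ℝ) (hu : Continuous u) (hup : ZPeriodic u)
    (hsub : ∀ x y, u y - u x ≤ S x y - Sbar)
    (um up ump : (Fin d → ℝ) → ℝ)
    (h1 : TendstoUniformly (fun (n : ℕ) (x : Fin d → ℝ) =>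
      (Tminus S)^[n] u x - n * Sbar) um Filter.atTop)
    (h2 : TendstoUniformly (fun (n : ℕ) (x : Fin d → ℝ) =>
      (Tplus S)^[n] u x + n * Sbar) up Filter.atTop)
    (h3 : TendstoUniformly (fun (n : ℕ) (x : Fin d → ℝ) =>
      (Tplus S)^[n] um x + n * Sbar) ump Filter.atTop) :
    up = ump := by
  classical
  obtain ⟨c, hc⟩ := S_lb S hS hco hdp
  obtain ⟨C, hC⟩ := S_diag_ub S hS hdp
  have hubdd : Bdd u := periodic_bdd u hu hup
  -- u + S̄ ≤ T⁻ u
  have hstep : ∀ y, u y + Sbar ≤ Tminus S u y := by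
    intro y
    refine le_ciInf fun x => ?_
    have := hsub x y; linarith
  -- u + n S̄ ≤ T⁻ⁿ u
  have hsubn : ∀ n x, u x + n * Sbar ≤ (Tminus S)^[n] u x := by
    intro n
    induction n with
    | zero => simp
    | succ n ih =>
      intro x
      have h1' := Tminus_iter_mono S hc hC hubdd
        (w := Tminus S u) (e := -Sbar) (fun y => by have := hstep y; linarith) n x
      rw [← Function.iterate_succ_apply] at h1'
      have h2' := ih x
      push_cast
      linarith
  -- distance form of h1
  have hdist : ∀ ε > (0:ℝ), ∀ᶠ n : ℕ in atTop,
      ∀ x, dist (um x) ((Tminus S)^[n] u x - n * Sbar) < ε :=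
    Metric.tendstoUniformly_iff.1 h1
  -- u ≤ um
  have hum_ge : ∀ x, u x ≤ um x := by
    intro x
    refine ge_of_tendsto (h1.tendsto_at x) ?_
    filter_upwards with n
    have := hsubn n x
    linarith
  -- um is bounded
  have humbdd : Bdd um := by
    obtain ⟨n0, hn0⟩ := (hdist 1 one_pos).exists
    obtain ⟨B, hB⟩ := Tminus_iter_bdd S hc hC hubdd n0
    refine ⟨B + |(n0 : ℝ) * Sbar| + 1, fun x => ?_⟩
    have h := hn0 x
    rw [Real.dist_eq, abs_lt] at h
    have hF := abs_le.1 (hB x)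
    have h5 := neg_abs_le ((n0 : ℝ) * Sbar)
    have h6 := le_abs_self ((n0 : ℝ) * Sbar)
    rw [abs_le]
    constructor <;> [skip; skip] <;> cases' h with ha hb <;> linarith
  -- Direction 1: up ≤ ump
  have hle1 : ∀ x, up x ≤ ump x := by
    intro x
    refine le_of_tendsto_of_tendsto' (h2.tendsto_at x) (h3.tendsto_at x) fun m => ?_
    have := Tplus_iter_mono S hc hC humbdd (v := u) (w := um) (e := 0)
      (fun z => by have := hum_ge z; linarith) m x
    linarith
  -- Direction 2: ump ≤ up
  have hle2 : ∀ x, ump x ≤ up x := by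
    intro x
    refine le_of_forall_pos_le_add fun ε hε => ?_
    obtain ⟨n, hn⟩ := (hdist ε hε).exists
    have hkey : ∀ k : ℕ, (Tplus S)^[n + k] um x + ((n + k : ℕ) : ℝ) * Sbar
        ≤ ((Tplus S)^[k] u x + (k : ℝ) * Sbar) + ε := by
      intro k
      have hm1 := Tplus_iter_mono S hc hC (Tminus_iter_bdd S hc hC hubdd n)
        (v := um) (w := (Tminus S)^[n] u) (e := -((n:ℝ) * Sbar) + ε)
        (fun z => by
          have := hn z
          rw [Real.dist_eq, abs_lt] at this
          cases' this with ha hb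
          linarith) (n + k) x
      have hm2 := TplusTminus_iter_le S hc hC hubdd n k x
      push_cast
      linarith
    have hL : Tendsto (fun k : ℕ => (Tplus S)^[n + k] um x + ((n + k : ℕ) : ℝ) * Sbar)
        atTop (𝓝 (ump x)) := by
      have hc1 := (h3.tendsto_at x).comp (tendsto_add_atTop_nat n)
      have : (fun k : ℕ => (Tplus S)^[n + k] um x + ((n + k : ℕ) : ℝ) * Sbar)
          = (fun m : ℕ => (Tplus S)^[m] um x + (m : ℝ) * Sbar) ∘ (fun k => k + n) := by
        funext k
        simp [Function.comp, Nat.add_comm]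
      rw [this]
      exact hc1
    have hR : Tendsto (fun k : ℕ => ((Tplus S)^[k] u x + (k : ℝ) * Sbar) + ε)
        atTop (𝓝 (up x + ε)) := (h2.tendsto_at x).add_const ε
    exact le_of_tendsto_of_tendsto' hL hR hkey
  funext x
  exact le_antisymm (hle1 x) (hle2 x)
end
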